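/- Let h be a hive such that every small triangle is contained in at most one flat rhombus of h, and let G be the associated red–blue graph. If h is a corner (extreme point) of its hive polytope, then G is acyclic, i.e., G contains no cycle. -/

import Mathlib

-- (statement defs inlined)


/-- A labeling of the triangular array of hive vertices `{(i,j) : i + j ≤ n}` is a hive
if all three types of rhombus inequalities hold. -/
def IsHive {α : Type*} [Ring α] [LinearOrder α] [IsStrictOrderedRing α] (n : ℕ) (h : ℕ → ℕ → α) : Prop :=
  ∀ i j : ℕ, i + j + 2 ≤ n →
    h i j + h (i+1) (j+1) ≤ h (i+1) j + h i (j+1) ∧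
    h i (j+1) + h (i+2) j ≤ h (i+1) j + h (i+1) (j+1) ∧
    h (i+1) j + h i (j+2) ≤ h i (j+1) + h (i+1) (j+1)

/-- `(i,j)` is a border vertex of the hive triangle of size `n`. -/
def InBorder (n i j : ℕ) : Prop := i + j ≤ n ∧ (i = 0 ∨ j = 0 ∨ i + j = n)

/-- The rhombus `R1(i,j) = U(i,j) ∪ D(i,j)` exists and is flat for `h`. -/
def FlatR1 (n : ℕ) (h : ℕ → ℕ → ℝ) (i j : ℕ) : Prop :=
  i + j + 2 ≤ n ∧ h (i+1) j + h i (j+1) = h i j + h (i+1) (j+1)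

/-- The rhombus `R2(i,j) = D(i,j) ∪ U(i+1,j)` exists and is flat for `h`. -/
def FlatR2 (n : ℕ) (h : ℕ → ℕ → ℝ) (i j : ℕ) : Prop :=
  i + j + 2 ≤ n ∧ h (i+1) j + h (i+1) (j+1) = h i (j+1) + h (i+2) j

/-- The rhombus `R3(i,j) = D(i,j) ∪ U(i,j+1)` exists and is flat for `h`. -/
def FlatR3 (n : ℕ) (h : ℕ → ℕ → ℝ) (i j : ℕ) : Prop :=
  i + j + 2 ≤ n ∧ h i (j+1) + h (i+1) (j+1) = h (i+1) j + h i (j+2)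

/-- Every small triangle is contained in at most one flat rhombus of `h`. -/
def TrianglesAtMostOneFlat (n : ℕ) (h : ℕ → ℕ → ℝ) : Prop :=
  (∀ i j, i + j + 1 ≤ n →
    ¬ (FlatR1 n h i j ∧ (1 ≤ i ∧ FlatR2 n h (i-1) j)) ∧
    ¬ (FlatR1 n h i j ∧ (1 ≤ j ∧ FlatR3 n h i (j-1))) ∧
    ¬ ((1 ≤ i ∧ FlatR2 n h (i-1) j) ∧ (1 ≤ j ∧ FlatR3 n h i (j-1)))) ∧
  (∀ i j, i + j + 2 ≤ n →
    ¬ (FlatR1 n h i j ∧ FlatR2 n h i j) ∧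
    ¬ (FlatR1 n h i j ∧ FlatR3 n h i j) ∧
    ¬ (FlatR2 n h i j ∧ FlatR3 n h i j))

/-- `h` is a corner (extreme point) of its hive polytope: if `h` is the midpoint of two
hives with the same border, then both coincide with `h` on the hive triangle. -/
def IsHiveCorner (n : ℕ) (h : ℕ → ℕ → ℝ) : Prop :=
  ∀ g₁ g₂ : ℕ → ℕ → ℝ, IsHive n g₁ → IsHive n g₂ →
    (∀ i j, InBorder n i j → g₁ i j = h i j) →
    (∀ i j, InBorder n i j → g₂ i j = h i j) →
    (∀ i j, i + j ≤ n → h i j = (g₁ i j + g₂ i j) / 2) →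
    ∀ i j, i + j ≤ n → g₁ i j = h i j ∧ g₂ i j = h i j

/-- The upward triangle `U(i,j)` exists and is contained in no flat rhombus of `h`
(a blue vertex of the red–blue graph). -/
def UpBlue (n : ℕ) (h : ℕ → ℕ → ℝ) (i j : ℕ) : Prop :=
  i + j + 1 ≤ n ∧ ¬ FlatR1 n h i j ∧ ¬ (1 ≤ i ∧ FlatR2 n h (i-1) j) ∧
    ¬ (1 ≤ j ∧ FlatR3 n h i (j-1))

/-- The downward triangle `D(i,j)` exists and is contained in no flat rhombus of `h`
(a blue vertex of the red–blue graph). -/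
def DownBlue (n : ℕ) (h : ℕ → ℕ → ℝ) (i j : ℕ) : Prop :=
  i + j + 2 ≤ n ∧ ¬ FlatR1 n h i j ∧ ¬ FlatR2 n h i j ∧ ¬ FlatR3 n h i j

/-- Vertices of the red–blue graph.  `Sum.inl (up?, i, j)` is the (blue) small triangle
`U(i,j)` (if `up? = true`) or `D(i,j)` (if `up? = false`); `Sum.inr (d, i, j)` is the
(red) side `a(i,j) = {(i,j),(i+1,j)}` (if `d = 0`), `b(i,j) = {(i,j),(i,j+1)}`
(if `d = 1`), or `c(i,j) = {(i+1,j),(i,j+1)}` (if `d = 2`). -/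
abbrev RBVertex : Type := (Bool × ℕ × ℕ) ⊕ (Fin 3 × ℕ × ℕ)

/-- The edge relation of the red–blue graph: each blue triangle is joined to its three
sides, and for each flat rhombus the two pairs of opposite sides are joined. -/
def RBRel (n : ℕ) (h : ℕ → ℕ → ℝ) (v w : RBVertex) : Prop :=
  (∃ i j, UpBlue n h i j ∧ v = Sum.inl (true, i, j) ∧
    (w = Sum.inr (0, i, j) ∨ w = Sum.inr (1, i, j) ∨ w = Sum.inr (2, i, j))) ∨
  (∃ i j, DownBlue n h i j ∧ v = Sum.inl (false, i, j) ∧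
    (w = Sum.inr (0, i, j+1) ∨ w = Sum.inr (1, i+1, j) ∨ w = Sum.inr (2, i, j))) ∨
  (∃ i j, FlatR1 n h i j ∧
    ((v = Sum.inr (0, i, j) ∧ w = Sum.inr (0, i, j+1)) ∨
     (v = Sum.inr (1, i, j) ∧ w = Sum.inr (1, i+1, j)))) ∨
  (∃ i j, FlatR2 n h i j ∧
    ((v = Sum.inr (2, i, j) ∧ w = Sum.inr (2, i+1, j)) ∨
     (v = Sum.inr (0, i, j+1) ∧ w = Sum.inr (0, i+1, j)))) ∨
  (∃ i j, FlatR3 n h i j ∧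
    ((v = Sum.inr (2, i, j) ∧ w = Sum.inr (2, i, j+1)) ∨
     (v = Sum.inr (1, i+1, j) ∧ w = Sum.inr (1, i, j+1))))

open SimpleGraph Walk
namespace CycAux
attribute [local instance] Classical.propDecidable
variable {V : Type*} {G : SimpleGraph V}

lemma support_getElem {u w : V} (p : G.Walk u w) (k : ℕ) (hk : k < p.length + 1) :
    p.support[k]'(by simpa [SimpleGraph.Walk.length_support] using hk) = p.getVert k := by
  induction p generalizing k with
  | nil =>
    have : k = 0 := by simpa using hk
    subst this; simp
  | cons h q ih =>
    cases k with
    | zero => simp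
    | succ k =>
      simp only [SimpleGraph.Walk.support_cons, SimpleGraph.Walk.getVert_cons_succ]
      rw [List.getElem_cons_succ]
      exact ih k (by simpa using hk)

lemma tail_len {v : V} (c : G.Walk v v) : c.support.tail.length = c.length := by
  rw [List.length_tail, SimpleGraph.Walk.length_support]; omega

lemma tail_getElem {v : V} (c : G.Walk v v) (k : ℕ) (hk : k < c.length) :
    c.support.tail[k]'(by rw [tail_len]; omega) = c.getVert (k + 1) := by
  have h1 : c.support = v :: c.support.tail := c.support_eq_cons
  have e1 : c.support[k+1]'(by rw [SimpleGraph.Walk.length_support]; omega)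
      = (v :: c.support.tail)[k+1]'(by simp [tail_len]; omega) :=
    List.getElem_of_eq h1 _
  have e2 := support_getElem c (k+1) (by omega)
  rw [List.getElem_cons_succ] at e1
  rw [← e1, e2]

variable {v : V} {c : G.Walk v v}

lemma getVert_injOn (hcyc : c.IsCycle) {k l : ℕ} (hk : k < c.length) (hl : l < c.length)
    (he : c.getVert k = c.getVert l) : k = l := by
  have hnd := hcyc.support_nodup
  have htl := tail_len c
  have hvv : c.getVert c.length = c.getVert 0 := by
    rw [SimpleGraph.Walk.getVert_length, SimpleGraph.Walk.getVert_zero]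
  have key : ∀ a b : ℕ, a < c.length → b < c.length →
      c.getVert (a+1) = c.getVert (b+1) → a = b := by
    intro a b ha hb hab
    have := (List.Nodup.getElem_inj_iff hnd (i := a) (j := b)
      (hi := by omega) (hj := by omega))
    rw [tail_getElem c a ha, tail_getElem c b hb] at this
    exact this.mp hab
  have hlen3 := hcyc.three_le_length
  rcases Nat.eq_zero_or_pos k with hk0 | hkp
  · rcases Nat.eq_zero_or_pos l with hl0 | hlp
    · omega
    · exfalso
      subst hk0
      obtain ⟨l', rfl⟩ : ∃ l', l = l' + 1 := ⟨l - 1, by omega⟩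
      have hv : c.getVert ((c.length - 1) + 1) = c.getVert (l' + 1) := by
        rw [show c.length - 1 + 1 = c.length by omega, hvv]; exact he
      have := key (c.length - 1) l' (by omega) (by omega) hv
      omega
  · rcases Nat.eq_zero_or_pos l with hl0 | hlp
    · exfalso
      subst hl0
      obtain ⟨k', rfl⟩ : ∃ k', k = k' + 1 := ⟨k - 1, by omega⟩
      have hv : c.getVert ((c.length - 1) + 1) = c.getVert (k' + 1) := by
        rw [show c.length - 1 + 1 = c.length by omega, hvv]; exact he.symm
      have := key (c.length - 1) k' (by omega) (by omega) hv
      omega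
    · obtain ⟨k', rfl⟩ : ∃ k', k = k' + 1 := ⟨k - 1, by omega⟩
      obtain ⟨l', rfl⟩ : ∃ l', l = l' + 1 := ⟨l - 1, by omega⟩
      have := key k' l' (by omega) (by omega) he
      omega

lemma exists_getVert_lt (hcyc : c.IsCycle) {u : V} (hu : u ∈ c.support) :
    ∃ k, k < c.length ∧ c.getVert k = u := by
  obtain ⟨k, hk1, hk2⟩ := SimpleGraph.Walk.mem_support_iff_exists_getVert.mp hu
  rcases Nat.lt_or_ge k c.length with hlt | hge
  · exact ⟨k, hlt, hk1⟩
  · have : k = c.length := by omega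
    subst this
    refine ⟨0, by have := hcyc.three_le_length; omega, ?_⟩
    rw [SimpleGraph.Walk.getVert_zero, ← SimpleGraph.Walk.getVert_length c, hk1]

noncomputable def idx (c : G.Walk v v) (u : V) : ℕ :=
  if h : ∃ k, k < c.length ∧ c.getVert k = u then Classical.choose h else 0

lemma idx_spec (hcyc : c.IsCycle) {u : V} (hu : u ∈ c.support) :
    idx c u < c.length ∧ c.getVert (idx c u) = u := by
  have h := exists_getVert_lt hcyc hu
  rw [idx, dif_pos h]
  exact Classical.choose_spec h

lemma idx_unique (hcyc : c.IsCycle) {u : V} (hu : u ∈ c.support) {k : ℕ}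
    (hk : k < c.length) (he : c.getVert k = u) : idx c u = k := by
  obtain ⟨h1, h2⟩ := idx_spec hcyc hu
  exact getVert_injOn hcyc h1 hk (by rw [h2, he])

noncomputable def nxt (c : G.Walk v v) (u : V) : V := c.getVert (idx c u + 1)

noncomputable def prv (c : G.Walk v v) (u : V) : V :=
  if idx c u = 0 then c.getVert (c.length - 1) else c.getVert (idx c u - 1)

lemma adj_nxt (hcyc : c.IsCycle) {u : V} (hu : u ∈ c.support) : G.Adj u (nxt c u) := by
  obtain ⟨h1, h2⟩ := idx_spec hcyc hu
  have h := c.adj_getVert_succ h1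
  rw [h2] at h
  exact h

lemma nxt_mem (hcyc : c.IsCycle) {u : V} (hu : u ∈ c.support) : nxt c u ∈ c.support := by
  obtain ⟨h1, h2⟩ := idx_spec hcyc hu
  exact SimpleGraph.Walk.mem_support_iff_exists_getVert.mpr ⟨idx c u + 1, rfl, by omega⟩

lemma adj_prv (hcyc : c.IsCycle) {u : V} (hu : u ∈ c.support) : G.Adj (prv c u) u := by
  obtain ⟨h1, h2⟩ := idx_spec hcyc hu
  have h3 := hcyc.three_le_length
  rw [prv]
  split_ifs with h0
  · rw [h0, SimpleGraph.Walk.getVert_zero] at h2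
    have hgl : c.getVert c.length = u := by rw [SimpleGraph.Walk.getVert_length]; exact h2
    conv_rhs => rw [← hgl]
    rw [show c.length = (c.length - 1) + 1 by omega]
    exact c.adj_getVert_succ (by omega)
  · conv_rhs => rw [← h2]
    rw [show idx c u = (idx c u - 1) + 1 by omega]
    exact c.adj_getVert_succ (by omega)

lemma prv_mem (hcyc : c.IsCycle) {u : V} (hu : u ∈ c.support) : prv c u ∈ c.support := by
  obtain ⟨h1, h2⟩ := idx_spec hcyc hu
  rw [prv]
  split_ifs <;>
  exact SimpleGraph.Walk.mem_support_iff_exists_getVert.mpr ⟨_, rfl, by omega⟩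

lemma prv_nxt (hcyc : c.IsCycle) {u : V} (hu : u ∈ c.support) : prv c (nxt c u) = u := by
  obtain ⟨h1, h2⟩ := idx_spec hcyc hu
  have h3 := hcyc.three_le_length
  rcases Nat.lt_or_ge (idx c u + 1) c.length with hlt | hge
  · have hidx : idx c (nxt c u) = idx c u + 1 :=
      idx_unique hcyc (nxt_mem hcyc hu) hlt rfl
    rw [prv, hidx, if_neg (by omega)]
    simpa using h2
  · have hl : idx c u + 1 = c.length := by omega
    have hnv : nxt c u = v := by rw [nxt, hl, SimpleGraph.Walk.getVert_length]
    have hidx : idx c (nxt c u) = 0 := by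
      apply idx_unique hcyc (nxt_mem hcyc hu) (by omega)
      rw [SimpleGraph.Walk.getVert_zero, hnv]
    rw [prv, hidx, if_pos rfl, show c.length - 1 = idx c u by omega, h2]

lemma nxt_prv (hcyc : c.IsCycle) {u : V} (hu : u ∈ c.support) : nxt c (prv c u) = u := by
  obtain ⟨h1, h2⟩ := idx_spec hcyc hu
  have h3 := hcyc.three_le_length
  rw [prv]
  split_ifs with h0
  · have hidx : idx c (c.getVert (c.length - 1)) = c.length - 1 :=
      idx_unique hcyc (SimpleGraph.Walk.mem_support_iff_exists_getVert.mpr ⟨_, rfl, by omega⟩)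
        (by omega) rfl
    rw [nxt, hidx, show c.length - 1 + 1 = c.length by omega,
      SimpleGraph.Walk.getVert_length]
    rw [h0, SimpleGraph.Walk.getVert_zero] at h2
    exact h2
  · have hidx : idx c (c.getVert (idx c u - 1)) = idx c u - 1 :=
      idx_unique hcyc (SimpleGraph.Walk.mem_support_iff_exists_getVert.mpr ⟨_, rfl, by omega⟩)
        (by omega) rfl
    rw [nxt, hidx, show idx c u - 1 + 1 = idx c u by omega, h2]

lemma prv_ne_nxt (hcyc : c.IsCycle) {u : V} (hu : u ∈ c.support) : prv c u ≠ nxt c u := by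
  obtain ⟨h1, h2⟩ := idx_spec hcyc hu
  have h3 := hcyc.three_le_length
  intro he
  rw [prv, nxt] at he
  split_ifs at he with h0
  · rw [h0] at he
    have := getVert_injOn hcyc (k := c.length - 1) (l := 1) (by omega) (by omega) he
    omega
  · rcases Nat.lt_or_ge (idx c u + 1) c.length with hlt | hge
    · have := getVert_injOn hcyc (k := idx c u - 1) (l := idx c u + 1) (by omega) hlt he
      omega
    · have hl : idx c u + 1 = c.length := by omega
      have he2 : c.getVert (idx c u - 1) = c.getVert 0 := by
        rw [SimpleGraph.Walk.getVert_zero]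
        rw [hl, SimpleGraph.Walk.getVert_length] at he
        exact he
      have := getVert_injOn hcyc (k := idx c u - 1) (l := 0) (by omega) (by omega) he2
      omega

lemma nxt_eq_of_prv_eq (hcyc : c.IsCycle) {u t : V} (hu : u ∈ c.support)
    (h : prv c u = t) : nxt c t = u := by rw [← h]; exact nxt_prv hcyc hu

lemma prv_eq_of_nxt_eq (hcyc : c.IsCycle) {u t : V} (hu : u ∈ c.support)
    (h : nxt c u = t) : prv c t = u := by rw [← h]; exact prv_nxt hcyc hu

end CycAux

namespace RB
open Sum

variable (n : ℕ) (h : ℕ → ℕ → ℝ)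

/-- `z` is the neighbor of the red side `r` through the "U-side" region. -/
def UFam (r : Fin 3 × ℕ × ℕ) (z : RBVertex) : Prop :=
  (UpBlue n h r.2.1 r.2.2 ∧ z = Sum.inl (true, r.2.1, r.2.2)) ∨
  (r.1 = 0 ∧ FlatR1 n h r.2.1 r.2.2 ∧ z = Sum.inr (0, r.2.1, r.2.2 + 1)) ∨
  (r.1 = 0 ∧ 1 ≤ r.2.1 ∧ FlatR2 n h (r.2.1 - 1) r.2.2 ∧ z = Sum.inr (0, r.2.1 - 1, r.2.2 + 1)) ∨
  (r.1 = 1 ∧ FlatR1 n h r.2.1 r.2.2 ∧ z = Sum.inr (1, r.2.1 + 1, r.2.2)) ∨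
  (r.1 = 1 ∧ 1 ≤ r.2.2 ∧ FlatR3 n h r.2.1 (r.2.2 - 1) ∧ z = Sum.inr (1, r.2.1 + 1, r.2.2 - 1)) ∨
  (r.1 = 2 ∧ 1 ≤ r.2.1 ∧ FlatR2 n h (r.2.1 - 1) r.2.2 ∧ z = Sum.inr (2, r.2.1 - 1, r.2.2)) ∨
  (r.1 = 2 ∧ 1 ≤ r.2.2 ∧ FlatR3 n h r.2.1 (r.2.2 - 1) ∧ z = Sum.inr (2, r.2.1, r.2.2 - 1))

/-- `z` is the neighbor of the red side `r` through the "D-side" region. -/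
def DFam (r : Fin 3 × ℕ × ℕ) (z : RBVertex) : Prop :=
  (r.1 = 0 ∧ 1 ≤ r.2.2 ∧ DownBlue n h r.2.1 (r.2.2 - 1) ∧ z = Sum.inl (false, r.2.1, r.2.2 - 1)) ∨
  (r.1 = 0 ∧ 1 ≤ r.2.2 ∧ FlatR1 n h r.2.1 (r.2.2 - 1) ∧ z = Sum.inr (0, r.2.1, r.2.2 - 1)) ∨
  (r.1 = 0 ∧ 1 ≤ r.2.2 ∧ FlatR2 n h r.2.1 (r.2.2 - 1) ∧ z = Sum.inr (0, r.2.1 + 1, r.2.2 - 1)) ∨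
  (r.1 = 1 ∧ 1 ≤ r.2.1 ∧ DownBlue n h (r.2.1 - 1) r.2.2 ∧ z = Sum.inl (false, r.2.1 - 1, r.2.2)) ∨
  (r.1 = 1 ∧ 1 ≤ r.2.1 ∧ FlatR1 n h (r.2.1 - 1) r.2.2 ∧ z = Sum.inr (1, r.2.1 - 1, r.2.2)) ∨
  (r.1 = 1 ∧ 1 ≤ r.2.1 ∧ FlatR3 n h (r.2.1 - 1) r.2.2 ∧ z = Sum.inr (1, r.2.1 - 1, r.2.2 + 1)) ∨
  (r.1 = 2 ∧ DownBlue n h r.2.1 r.2.2 ∧ z = Sum.inl (false, r.2.1, r.2.2)) ∨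
  (r.1 = 2 ∧ FlatR2 n h r.2.1 r.2.2 ∧ z = Sum.inr (2, r.2.1 + 1, r.2.2)) ∨
  (r.1 = 2 ∧ FlatR3 n h r.2.1 r.2.2 ∧ z = Sum.inr (2, r.2.1, r.2.2 + 1))

variable {n h}

namespace UFam
variable {i j : ℕ} {d : Fin 3}
lemma blue (hb : UpBlue n h i j) : UFam n h (d,i,j) (Sum.inl (true,i,j)) := Or.inl ⟨hb, rfl⟩
lemma r1a (hb : FlatR1 n h i j) : UFam n h (0,i,j) (Sum.inr (0,i,j+1)) :=
  Or.inr (Or.inl ⟨rfl, hb, rfl⟩)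
lemma r2a (hi : 1 ≤ i) (hb : FlatR2 n h (i-1) j) : UFam n h (0,i,j) (Sum.inr (0,i-1,j+1)) :=
  Or.inr (Or.inr (Or.inl ⟨rfl, hi, hb, rfl⟩))
lemma r1b (hb : FlatR1 n h i j) : UFam n h (1,i,j) (Sum.inr (1,i+1,j)) :=
  Or.inr (Or.inr (Or.inr (Or.inl ⟨rfl, hb, rfl⟩)))
lemma r3b (hj : 1 ≤ j) (hb : FlatR3 n h i (j-1)) : UFam n h (1,i,j) (Sum.inr (1,i+1,j-1)) :=
  Or.inr (Or.inr (Or.inr (Or.inr (Or.inl ⟨rfl, hj, hb, rfl⟩))))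
lemma r2c (hi : 1 ≤ i) (hb : FlatR2 n h (i-1) j) : UFam n h (2,i,j) (Sum.inr (2,i-1,j)) :=
  Or.inr (Or.inr (Or.inr (Or.inr (Or.inr (Or.inl ⟨rfl, hi, hb, rfl⟩)))))
lemma r3c (hj : 1 ≤ j) (hb : FlatR3 n h i (j-1)) : UFam n h (2,i,j) (Sum.inr (2,i,j-1)) :=
  Or.inr (Or.inr (Or.inr (Or.inr (Or.inr (Or.inr ⟨rfl, hj, hb, rfl⟩)))))
end UFam

namespace DFam
variable {i j : ℕ}
lemma blue0 (hj : 1 ≤ j) (hb : DownBlue n h i (j-1)) :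
    DFam n h (0,i,j) (Sum.inl (false,i,j-1)) := Or.inl ⟨rfl, hj, hb, rfl⟩
lemma r1a (hj : 1 ≤ j) (hb : FlatR1 n h i (j-1)) : DFam n h (0,i,j) (Sum.inr (0,i,j-1)) :=
  Or.inr (Or.inl ⟨rfl, hj, hb, rfl⟩)
lemma r2a (hj : 1 ≤ j) (hb : FlatR2 n h i (j-1)) : DFam n h (0,i,j) (Sum.inr (0,i+1,j-1)) :=
  Or.inr (Or.inr (Or.inl ⟨rfl, hj, hb, rfl⟩))
lemma blue1 (hi : 1 ≤ i) (hb : DownBlue n h (i-1) j) :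
    DFam n h (1,i,j) (Sum.inl (false,i-1,j)) :=
  Or.inr (Or.inr (Or.inr (Or.inl ⟨rfl, hi, hb, rfl⟩)))
lemma r1b (hi : 1 ≤ i) (hb : FlatR1 n h (i-1) j) : DFam n h (1,i,j) (Sum.inr (1,i-1,j)) :=
  Or.inr (Or.inr (Or.inr (Or.inr (Or.inl ⟨rfl, hi, hb, rfl⟩))))
lemma r3b (hi : 1 ≤ i) (hb : FlatR3 n h (i-1) j) : DFam n h (1,i,j) (Sum.inr (1,i-1,j+1)) :=
  Or.inr (Or.inr (Or.inr (Or.inr (Or.inr (Or.inl ⟨rfl, hi, hb, rfl⟩)))))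
lemma blue2 (hb : DownBlue n h i j) : DFam n h (2,i,j) (Sum.inl (false,i,j)) :=
  Or.inr (Or.inr (Or.inr (Or.inr (Or.inr (Or.inr (Or.inl ⟨rfl, hb, rfl⟩))))))
lemma r2c (hb : FlatR2 n h i j) : DFam n h (2,i,j) (Sum.inr (2,i+1,j)) :=
  Or.inr (Or.inr (Or.inr (Or.inr (Or.inr (Or.inr (Or.inr (Or.inl ⟨rfl, hb, rfl⟩)))))))
lemma r3c (hb : FlatR3 n h i j) : DFam n h (2,i,j) (Sum.inr (2,i,j+1)) :=
  Or.inr (Or.inr (Or.inr (Or.inr (Or.inr (Or.inr (Or.inr (Or.inr ⟨rfl, hb, rfl⟩)))))))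
end DFam

lemma fam_of_rel_right {r : Fin 3 × ℕ × ℕ} {z : RBVertex}
    (hrel : RBRel n h (Sum.inr r) z) : UFam n h r z ∨ DFam n h r z := by
  rcases hrel with ⟨i,j,hb,hv,hw⟩|⟨i,j,hb,hv,hw⟩|⟨i,j,hb,hvw⟩|⟨i,j,hb,hvw⟩|⟨i,j,hb,hvw⟩
  · exact absurd hv (by simp)
  · exact absurd hv (by simp)
  · rcases hvw with ⟨hv,hw⟩|⟨hv,hw⟩ <;> (obtain rfl := Sum.inr.inj hv; subst hw)
    · exact Or.inl (UFam.r1a hb)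
    · exact Or.inl (UFam.r1b hb)
  · rcases hvw with ⟨hv,hw⟩|⟨hv,hw⟩ <;> (obtain rfl := Sum.inr.inj hv; subst hw)
    · exact Or.inr (DFam.r2c hb)
    · exact Or.inr (DFam.r2a (j := j+1) (by omega) hb)
  · rcases hvw with ⟨hv,hw⟩|⟨hv,hw⟩ <;> (obtain rfl := Sum.inr.inj hv; subst hw)
    · exact Or.inr (DFam.r3c hb)
    · exact Or.inr (DFam.r3b (i := i+1) (by omega) hb)

lemma fam_of_rel_left {r : Fin 3 × ℕ × ℕ} {z : RBVertex}
    (hrel : RBRel n h z (Sum.inr r)) : UFam n h r z ∨ DFam n h r z := by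
  rcases hrel with ⟨i,j,hb,hv,hw⟩|⟨i,j,hb,hv,hw⟩|⟨i,j,hb,hvw⟩|⟨i,j,hb,hvw⟩|⟨i,j,hb,hvw⟩
  · rcases hw with hw|hw|hw <;> (obtain rfl := Sum.inr.inj hw; subst hv) <;>
      exact Or.inl (UFam.blue hb)
  · rcases hw with hw|hw|hw <;> (obtain rfl := Sum.inr.inj hw; subst hv)
    · exact Or.inr (DFam.blue0 (j := j+1) (by omega) hb)
    · exact Or.inr (DFam.blue1 (i := i+1) (by omega) hb)
    · exact Or.inr (DFam.blue2 hb)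
  · rcases hvw with ⟨hv,hw⟩|⟨hv,hw⟩ <;> (obtain rfl := Sum.inr.inj hw; subst hv)
    · exact Or.inr (DFam.r1a (j := j+1) (by omega) hb)
    · exact Or.inr (DFam.r1b (i := i+1) (by omega) hb)
  · rcases hvw with ⟨hv,hw⟩|⟨hv,hw⟩ <;> (obtain rfl := Sum.inr.inj hw; subst hv)
    · exact Or.inl (UFam.r2c (i := i+1) (by omega) hb)
    · exact Or.inl (UFam.r2a (i := i+1) (by omega) hb)
  · rcases hvw with ⟨hv,hw⟩|⟨hv,hw⟩ <;> (obtain rfl := Sum.inr.inj hw; subst hv)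
    · exact Or.inl (UFam.r3c (j := j+1) (by omega) hb)
    · exact Or.inl (UFam.r3b (j := j+1) (by omega) hb)

lemma fam_of_adj {r : Fin 3 × ℕ × ℕ} {z : RBVertex}
    (hadj : (SimpleGraph.fromRel (RBRel n h)).Adj (Sum.inr r) z) :
    UFam n h r z ∨ DFam n h r z := by
  obtain ⟨-, hrel | hrel⟩ := hadj
  · exact fam_of_rel_right hrel
  · exact fam_of_rel_left hrel

lemma adj_inl {t : Bool × ℕ × ℕ} {z : RBVertex}
    (hadj : (SimpleGraph.fromRel (RBRel n h)).Adj (Sum.inl t) z) :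
    (∃ i j, t = (true, i, j) ∧ UpBlue n h i j ∧
      (z = Sum.inr (0,i,j) ∨ z = Sum.inr (1,i,j) ∨ z = Sum.inr (2,i,j))) ∨
    (∃ i j, t = (false, i, j) ∧ DownBlue n h i j ∧
      (z = Sum.inr (0,i,j+1) ∨ z = Sum.inr (1,i+1,j) ∨ z = Sum.inr (2,i,j))) := by
  obtain ⟨-, hrel | hrel⟩ := hadj
  · rcases hrel with ⟨i,j,hb,hv,hw⟩|⟨i,j,hb,hv,hw⟩|⟨i,j,hb,hvw⟩|⟨i,j,hb,hvw⟩|⟨i,j,hb,hvw⟩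
    · exact Or.inl ⟨i, j, Sum.inl.inj hv, hb, hw⟩
    · exact Or.inr ⟨i, j, Sum.inl.inj hv, hb, hw⟩
    all_goals (rcases hvw with ⟨hv,hw⟩|⟨hv,hw⟩ <;> exact absurd hv (by simp))
  · rcases hrel with ⟨i,j,hb,hv,hw⟩|⟨i,j,hb,hv,hw⟩|⟨i,j,hb,hvw⟩|⟨i,j,hb,hvw⟩|⟨i,j,hb,hvw⟩
    · rcases hw with hw|hw|hw <;> exact absurd hw (by simp)
    · rcases hw with hw|hw|hw <;> exact absurd hw (by simp)
    all_goals (rcases hvw with ⟨hv,hw⟩|⟨hv,hw⟩ <;> exact absurd hw (by simp))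

lemma UFam_unique (hflat : TrianglesAtMostOneFlat n h) {r : Fin 3 × ℕ × ℕ} {z z' : RBVertex}
    (h1 : UFam n h r z) (h2 : UFam n h r z') : z = z' := by
  obtain ⟨d,p,q⟩ := r
  have E1 : ¬(FlatR1 n h p q ∧ (1 ≤ p ∧ FlatR2 n h (p-1) q)) := by
    rintro ⟨f1,f2⟩; exact (hflat.1 p q (by have := f1.1; omega)).1 ⟨f1,f2⟩
  have E2 : ¬(FlatR1 n h p q ∧ (1 ≤ q ∧ FlatR3 n h p (q-1))) := by
    rintro ⟨f1,f2⟩; exact (hflat.1 p q (by have := f1.1; omega)).2.1 ⟨f1,f2⟩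
  have E3 : ¬((1 ≤ p ∧ FlatR2 n h (p-1) q) ∧ (1 ≤ q ∧ FlatR3 n h p (q-1))) := by
    rintro ⟨f2,f3⟩; exact (hflat.1 p q (by have := f2.2.1; omega)).2.2 ⟨f2,f3⟩
  rcases h1 with ⟨hb,rfl⟩|⟨hd,hb,rfl⟩|⟨hd,hi,hb,rfl⟩|⟨hd,hb,rfl⟩|⟨hd,hj,hb,rfl⟩|⟨hd,hi,hb,rfl⟩|⟨hd,hj,hb,rfl⟩ <;>
    rcases h2 with ⟨hb',he'⟩|⟨hd',hb',he'⟩|⟨hd',hi',hb',he'⟩|⟨hd',hb',he'⟩|⟨hd',hj',hb',he'⟩|⟨hd',hi',hb',he'⟩|⟨hd',hj',hb',he'⟩ <;>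
    first
      | exact he'.symm
      | (exfalso; exact hb.2.1 hb')
      | (exfalso; exact hb.2.2.1 ⟨hi', hb'⟩)
      | (exfalso; exact hb.2.2.2 ⟨hj', hb'⟩)
      | (exfalso; exact hb'.2.1 hb)
      | (exfalso; exact hb'.2.2.1 ⟨hi, hb⟩)
      | (exfalso; exact hb'.2.2.2 ⟨hj, hb⟩)
      | (exfalso; exact E1 ⟨hb, hi', hb'⟩)
      | (exfalso; exact E1 ⟨hb', hi, hb⟩)
      | (exfalso; exact E2 ⟨hb, hj', hb'⟩)
      | (exfalso; exact E2 ⟨hb', hj, hb⟩)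
      | (exfalso; exact E3 ⟨⟨hi,hb⟩, ⟨hj', hb'⟩⟩)
      | (exfalso; exact E3 ⟨⟨hi',hb'⟩, ⟨hj, hb⟩⟩)
      | (exfalso; rw [hd] at hd'; exact absurd hd' (by decide))

lemma DFam_unique (hflat : TrianglesAtMostOneFlat n h) {r : Fin 3 × ℕ × ℕ} {z z' : RBVertex}
    (h1 : DFam n h r z) (h2 : DFam n h r z') : z = z' := by
  obtain ⟨d,p,q⟩ := r
  have E1 : ¬(FlatR1 n h p (q-1) ∧ FlatR2 n h p (q-1)) := by
    rintro ⟨f1,f2⟩; exact (hflat.2 p (q-1) f1.1).1 ⟨f1,f2⟩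
  have E2 : ¬(FlatR1 n h (p-1) q ∧ FlatR3 n h (p-1) q) := by
    rintro ⟨f1,f2⟩; exact (hflat.2 (p-1) q f1.1).2.1 ⟨f1,f2⟩
  have E3 : ¬(FlatR2 n h p q ∧ FlatR3 n h p q) := by
    rintro ⟨f1,f2⟩; exact (hflat.2 p q f1.1).2.2 ⟨f1,f2⟩
  rcases h1 with ⟨hd,hj,hb,rfl⟩|⟨hd,hj,hb,rfl⟩|⟨hd,hj,hb,rfl⟩|⟨hd,hi,hb,rfl⟩|⟨hd,hi,hb,rfl⟩|⟨hd,hi,hb,rfl⟩|⟨hd,hb,rfl⟩|⟨hd,hb,rfl⟩|⟨hd,hb,rfl⟩ <;>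
    rcases h2 with ⟨hd',hj',hb',he'⟩|⟨hd',hj',hb',he'⟩|⟨hd',hj',hb',he'⟩|⟨hd',hi',hb',he'⟩|⟨hd',hi',hb',he'⟩|⟨hd',hi',hb',he'⟩|⟨hd',hb',he'⟩|⟨hd',hb',he'⟩|⟨hd',hb',he'⟩ <;>
    first
      | exact he'.symm
      | (exfalso; exact hb.2.1 hb')
      | (exfalso; exact hb.2.2.1 hb')
      | (exfalso; exact hb.2.2.2 hb')
      | (exfalso; exact hb'.2.1 hb)
      | (exfalso; exact hb'.2.2.1 hb)
      | (exfalso; exact hb'.2.2.2 hb)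
      | (exfalso; exact E1 ⟨hb, hb'⟩)
      | (exfalso; exact E1 ⟨hb', hb⟩)
      | (exfalso; exact E2 ⟨hb, hb'⟩)
      | (exfalso; exact E2 ⟨hb', hb⟩)
      | (exfalso; exact E3 ⟨hb, hb'⟩)
      | (exfalso; exact E3 ⟨hb', hb⟩)
      | (exfalso; rw [hd] at hd'; exact absurd hd' (by decide))

noncomputable def sgn (d : Fin 3) : ℝ := if d = 1 then -1 else 1

noncomputable def orv (r : Fin 3 × ℕ × ℕ) (z : RBVertex) : ℝ :=
  match z with
  | Sum.inl t => if t.1 then 1 else -1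
  | Sum.inr s =>
      if r.1 = 0 then (if r.2.2 < s.2.2 then 1 else -1)
      else if r.1 = 1 then (if r.2.1 < s.2.1 then 1 else -1)
      else (if s.2.1 + s.2.2 < r.2.1 + r.2.2 then 1 else -1)

lemma orv_UFam {r : Fin 3 × ℕ × ℕ} {z : RBVertex} (hu : UFam n h r z) : orv r z = 1 := by
  obtain ⟨d,p,q⟩ := r
  rcases hu with ⟨hb,rfl⟩|h1|h1|h1|h1|h1|h1
  · simp [orv]
  · obtain ⟨hd,hb,rfl⟩ := h1; obtain rfl : d = 0 := hd; simp [orv]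
  · obtain ⟨hd,hi,hb,rfl⟩ := h1; obtain rfl : d = 0 := hd; simp [orv]
  · obtain ⟨hd,hb,rfl⟩ := h1; obtain rfl : d = 1 := hd; simp [orv]
  · obtain ⟨hd,hj,hb,rfl⟩ := h1; obtain rfl : d = 1 := hd; simp [orv]
  · obtain ⟨hd,hi,hb,rfl⟩ := h1; obtain rfl : d = 2 := hd
    have hi' : 1 ≤ p := hi
    simp [orv]; omega
  · obtain ⟨hd,hj,hb,rfl⟩ := h1; obtain rfl : d = 2 := hd
    have hj' : 1 ≤ q := hj
    simp [orv]; omega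

lemma orv_DFam {r : Fin 3 × ℕ × ℕ} {z : RBVertex} (hu : DFam n h r z) : orv r z = -1 := by
  obtain ⟨d,p,q⟩ := r
  rcases hu with h1|h1|h1|h1|h1|h1|h1|h1|h1
  · obtain ⟨hd,hj,hb,rfl⟩ := h1; obtain rfl : d = 0 := hd; simp [orv]
  · obtain ⟨hd,hj,hb,rfl⟩ := h1; obtain rfl : d = 0 := hd; simp [orv]
  · obtain ⟨hd,hj,hb,rfl⟩ := h1; obtain rfl : d = 0 := hd; simp [orv]
  · obtain ⟨hd,hi,hb,rfl⟩ := h1; obtain rfl : d = 1 := hd; simp [orv]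
  · obtain ⟨hd,hi,hb,rfl⟩ := h1; obtain rfl : d = 1 := hd; simp [orv]
  · obtain ⟨hd,hi,hb,rfl⟩ := h1; obtain rfl : d = 1 := hd; simp [orv]
  · obtain ⟨hd,hb,rfl⟩ := h1; obtain rfl : d = 2 := hd; simp [orv]
  · obtain ⟨hd,hb,rfl⟩ := h1; obtain rfl : d = 2 := hd; simp [orv]
  · obtain ⟨hd,hb,rfl⟩ := h1; obtain rfl : d = 2 := hd; simp [orv]

open CycAux
attribute [local instance] Classical.propDecidable

variable {vv : RBVertex} {c : (SimpleGraph.fromRel (RBRel n h)).Walk vv vv}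

noncomputable def xval (c : (SimpleGraph.fromRel (RBRel n h)).Walk vv vv)
    (r : Fin 3 × ℕ × ℕ) : ℝ :=
  have : Decidable ((Sum.inr r : RBVertex) ∈ c.support) := Classical.propDecidable _
  if (Sum.inr r : RBVertex) ∈ c.support then sgn r.1 * orv r (CycAux.nxt c (Sum.inr r)) else 0

lemma xval_of_not_mem {r : Fin 3 × ℕ × ℕ} (hr : Sum.inr r ∉ c.support) : xval c r = 0 := by
  rw [xval, if_neg hr]

lemma struct (hcyc : c.IsCycle) (hflat : TrianglesAtMostOneFlat n h)
    {r : Fin 3 × ℕ × ℕ} (hr : Sum.inr r ∈ c.support) :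
    (UFam n h r (nxt c (Sum.inr r)) ∧ DFam n h r (prv c (Sum.inr r))) ∨
    (DFam n h r (nxt c (Sum.inr r)) ∧ UFam n h r (prv c (Sum.inr r))) := by
  have hA := fam_of_adj (adj_nxt hcyc hr)
  have hB := fam_of_adj ((adj_prv hcyc hr).symm)
  have hne := prv_ne_nxt hcyc hr
  rcases hA with hA|hA <;> rcases hB with hB|hB
  · exact absurd (UFam_unique hflat hA hB).symm hne
  · exact Or.inl ⟨hA,hB⟩
  · exact Or.inr ⟨hA,hB⟩
  · exact absurd (DFam_unique hflat hA hB).symm hne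

lemma xval_nxt_UFam {r : Fin 3 × ℕ × ℕ} (hr : Sum.inr r ∈ c.support)
    (hU : UFam n h r (nxt c (Sum.inr r))) : xval c r = sgn r.1 := by
  rw [xval, if_pos hr, orv_UFam hU, mul_one]

lemma xval_nxt_DFam {r : Fin 3 × ℕ × ℕ} (hr : Sum.inr r ∈ c.support)
    (hD : DFam n h r (nxt c (Sum.inr r))) : xval c r = -sgn r.1 := by
  rw [xval, if_pos hr, orv_DFam hD]; ring

lemma nxt_eq_of_UFam (hcyc : c.IsCycle) (hflat : TrianglesAtMostOneFlat n h)
    {r : Fin 3 × ℕ × ℕ} {t : RBVertex} (hr : Sum.inr r ∈ c.support)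
    (hU : UFam n h r t) : nxt c (Sum.inr r) = t ∨ prv c (Sum.inr r) = t := by
  rcases struct hcyc hflat hr with ⟨hU',_⟩ | ⟨_,hU'⟩
  · exact Or.inl (UFam_unique hflat hU' hU)
  · exact Or.inr (UFam_unique hflat hU' hU)

lemma pair_eq (hcyc : c.IsCycle) (hflat : TrianglesAtMostOneFlat n h)
    {r r' : Fin 3 × ℕ × ℕ}
    (hU : UFam n h r (Sum.inr r')) (hD : DFam n h r' (Sum.inr r))
    (hl : sgn r.1 = sgn r'.1) :
    xval c r = xval c r' := by
  rcases Classical.em ((Sum.inr r : RBVertex) ∈ c.support) with hr | hr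
  · rcases nxt_eq_of_UFam hcyc hflat hr hU with hn | hp
    · have hr' : Sum.inr r' ∈ c.support := hn ▸ nxt_mem hcyc hr
      have hx : xval c r = sgn r.1 := xval_nxt_UFam hr (by rw [hn]; exact hU)
      have hpr : prv c (Sum.inr r') = Sum.inr r := by
        rw [← hn]; exact prv_nxt hcyc hr
      have hne := prv_ne_nxt hcyc hr'
      rcases struct hcyc hflat hr' with ⟨hU',hD'⟩ | ⟨hD',hU'⟩
      · rw [hx, xval_nxt_UFam hr' hU', hl]
      · exact absurd (by rw [hpr, DFam_unique hflat hD' hD] : prv c (Sum.inr r') = nxt c (Sum.inr r')) hne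
    · have hr' : Sum.inr r' ∈ c.support := hp ▸ prv_mem hcyc hr
      have hnn : nxt c (Sum.inr r') = Sum.inr r := nxt_eq_of_prv_eq hcyc hr hp
      have hx' : xval c r' = -sgn r'.1 := by
        rw [xval, if_pos hr', hnn, orv_DFam hD]; ring
      have hne := prv_ne_nxt hcyc hr
      rcases struct hcyc hflat hr with ⟨hU',hD'⟩ | ⟨hD',hU'⟩
      · exact absurd (by rw [hp, ← UFam_unique hflat hU' hU] : prv c (Sum.inr r) = nxt c (Sum.inr r)) hne
      · rw [xval_nxt_DFam hr hD', hx', hl]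
  · have hr' : Sum.inr r' ∉ c.support := by
      intro hr'
      rcases struct hcyc hflat hr' with ⟨_,hD'⟩ | ⟨hD',_⟩
      · exact hr (by rw [show Sum.inr r = prv c (Sum.inr r') from (DFam_unique hflat hD' hD).symm]; exact prv_mem hcyc hr')
      · exact hr (by rw [show Sum.inr r = nxt c (Sum.inr r') from (DFam_unique hflat hD' hD).symm]; exact nxt_mem hcyc hr')
    rw [xval_of_not_mem hr, xval_of_not_mem hr']

section pairs
variable {i j : ℕ}

lemma pairR1a (hcyc : c.IsCycle) (hflat : TrianglesAtMostOneFlat n h) (hb : FlatR1 n h i j) :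
    xval c (0,i,j) = xval c (0,i,j+1) :=
  pair_eq hcyc hflat (UFam.r1a hb) (DFam.r1a (j := j+1) (by omega) hb) rfl

lemma pairR1b (hcyc : c.IsCycle) (hflat : TrianglesAtMostOneFlat n h) (hb : FlatR1 n h i j) :
    xval c (1,i,j) = xval c (1,i+1,j) :=
  pair_eq hcyc hflat (UFam.r1b hb) (DFam.r1b (i := i+1) (by omega) hb) rfl

lemma pairR2a (hcyc : c.IsCycle) (hflat : TrianglesAtMostOneFlat n h) (hb : FlatR2 n h i j) :
    xval c (2,i,j) = xval c (2,i+1,j) :=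
  (pair_eq hcyc hflat (UFam.r2c (i := i+1) (by omega) hb) (DFam.r2c hb) rfl).symm

lemma pairR2b (hcyc : c.IsCycle) (hflat : TrianglesAtMostOneFlat n h) (hb : FlatR2 n h i j) :
    xval c (0,i,j+1) = xval c (0,i+1,j) :=
  (pair_eq hcyc hflat (UFam.r2a (i := i+1) (by omega) hb)
    (DFam.r2a (j := j+1) (by omega) hb) rfl).symm

lemma pairR3a (hcyc : c.IsCycle) (hflat : TrianglesAtMostOneFlat n h) (hb : FlatR3 n h i j) :
    xval c (2,i,j) = xval c (2,i,j+1) :=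
  (pair_eq hcyc hflat (UFam.r3c (j := j+1) (by omega) hb) (DFam.r3c hb) rfl).symm

lemma pairR3b (hcyc : c.IsCycle) (hflat : TrianglesAtMostOneFlat n h) (hb : FlatR3 n h i j) :
    xval c (1,i+1,j) = xval c (1,i,j+1) :=
  (pair_eq hcyc hflat (UFam.r3b (j := j+1) (by omega) hb)
    (DFam.r3b (i := i+1) (by omega) hb) rfl).symm

end pairs
lemma blue_up (hcyc : c.IsCycle) (hflat : TrianglesAtMostOneFlat n h) {i j : ℕ}
    (hb : UpBlue n h i j) :
    xval c (0,i,j) - xval c (1,i,j) + xval c (2,i,j) = 0 := by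
  set b : RBVertex := Sum.inl (true,i,j) with hbdef
  have hUonly : ∀ (d : Fin 3) z, UFam n h (d,i,j) z → z = b := by
    intro d z hz
    rcases hz with ⟨_,rfl⟩|⟨hd,hf,_⟩|⟨hd,hi',hf,_⟩|⟨hd,hf,_⟩|⟨hd,hj',hf,_⟩|⟨hd,hi',hf,_⟩|⟨hd,hj',hf,_⟩
    · rfl
    · exact absurd hf hb.2.1
    · exact absurd ⟨hi',hf⟩ hb.2.2.1
    · exact absurd hf hb.2.1
    · exact absurd ⟨hj',hf⟩ hb.2.2.2
    · exact absurd ⟨hi',hf⟩ hb.2.2.1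
    · exact absurd ⟨hj',hf⟩ hb.2.2.2
  have hside : ∀ d : Fin 3, (Sum.inr (d,i,j) : RBVertex) ∈ c.support →
      (Sum.inr (d,i,j) = prv c b ∨ Sum.inr (d,i,j) = nxt c b) ∧ b ∈ c.support := by
    intro d hs
    have hUb : UFam n h (d,i,j) b := UFam.blue hb
    rcases nxt_eq_of_UFam hcyc hflat hs hUb with hn | hp
    · have he : prv c b = Sum.inr (d,i,j) := prv_eq_of_nxt_eq hcyc hs hn
      exact ⟨Or.inl he.symm, by rw [← hn]; exact nxt_mem hcyc hs⟩
    · have he : nxt c b = Sum.inr (d,i,j) := nxt_eq_of_prv_eq hcyc hs hp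
      exact ⟨Or.inr he.symm, by rw [← hp]; exact prv_mem hcyc hs⟩
  rcases Classical.em (b ∈ c.support) with hbm | hbm
  · have hval : ∀ d : Fin 3, (Sum.inr (d,i,j) : RBVertex) = prv c b → xval c (d,i,j) = sgn d := by
      intro d hd
      have hs : (Sum.inr (d,i,j) : RBVertex) ∈ c.support := by
        rw [hd]; exact prv_mem hcyc hbm
      have hnx : nxt c (Sum.inr (d,i,j)) = b := by rw [hd]; exact nxt_prv hcyc hbm
      rw [xval, if_pos hs, hnx, hbdef]
      simp [orv]
    have hval' : ∀ d : Fin 3, (Sum.inr (d,i,j) : RBVertex) = nxt c b → xval c (d,i,j) = -sgn d := by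
      intro d hd
      have hs : (Sum.inr (d,i,j) : RBVertex) ∈ c.support := by
        rw [hd]; exact nxt_mem hcyc hbm
      have hpv : prv c (Sum.inr (d,i,j)) = b := by rw [hd]; exact prv_nxt hcyc hbm
      rcases struct hcyc hflat hs with ⟨hU',hD'⟩ | ⟨hD',hU'⟩
      · exfalso
        exact (prv_ne_nxt hcyc hs) (by rw [hpv, hUonly d _ hU'])
      · rw [xval, if_pos hs, orv_DFam hD']; ring
    have hzero : ∀ d : Fin 3, (Sum.inr (d,i,j) : RBVertex) ≠ prv c b →
        (Sum.inr (d,i,j) : RBVertex) ≠ nxt c b → xval c (d,i,j) = 0 := by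
      intro d h1 h2
      rw [xval, if_neg]
      intro hs
      rcases (hside d hs).1 with e|e
      exacts [h1 e, h2 e]
    have hpb : prv c b = Sum.inr ((0:Fin 3),i,j) ∨ prv c b = Sum.inr ((1:Fin 3),i,j) ∨
        prv c b = Sum.inr ((2:Fin 3),i,j) := by
      rcases adj_inl ((adj_prv hcyc hbm).symm) with ⟨i',j',ht,_,hz⟩ | ⟨i',j',ht,_,hz⟩
      · obtain ⟨-, rfl, rfl⟩ : true = true ∧ i = i' ∧ j = j' := by
          simpa [hbdef, Prod.ext_iff] using ht
        exact hz
      · exact absurd (by simpa [hbdef, Prod.ext_iff] using ht : False) id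
    have hnb : nxt c b = Sum.inr ((0:Fin 3),i,j) ∨ nxt c b = Sum.inr ((1:Fin 3),i,j) ∨
        nxt c b = Sum.inr ((2:Fin 3),i,j) := by
      rcases adj_inl (adj_nxt hcyc hbm) with ⟨i',j',ht,_,hz⟩ | ⟨i',j',ht,_,hz⟩
      · obtain ⟨-, rfl, rfl⟩ : true = true ∧ i = i' ∧ j = j' := by
          simpa [hbdef, Prod.ext_iff] using ht
        exact hz
      · exact absurd (by simpa [hbdef, Prod.ext_iff] using ht : False) id
    have hne := prv_ne_nxt hcyc hbm
    rcases hpb with e1|e1|e1 <;> rcases hnb with e2|e2|e2 <;>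
      first
        | (exfalso; exact hne (e1.trans e2.symm))
        | (rw [hval _ e1.symm, hval' _ e2.symm,
            hzero _ (by rw [e1]; simp) (by rw [e2]; simp)]; simp [sgn])
  · have hz : ∀ d : Fin 3, xval c (d,i,j) = 0 := by
      intro d
      rw [xval, if_neg]
      intro hs
      exact hbm (hside d hs).2
    rw [hz 0, hz 1, hz 2]; ring

lemma blue_down (hcyc : c.IsCycle) (hflat : TrianglesAtMostOneFlat n h) {i j : ℕ}
    (hb : DownBlue n h i j) :
    xval c (0,i,j+1) - xval c (1,i+1,j) + xval c (2,i,j) = 0 := by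
  set b : RBVertex := Sum.inl (false,i,j) with hbdef
  have hDonly : ∀ (r' : Fin 3 × ℕ × ℕ) z,
      (r' = ((0:Fin 3),i,j+1) ∨ r' = ((1:Fin 3),i+1,j) ∨ r' = ((2:Fin 3),i,j)) →
      DFam n h r' z → z = b := by
    rintro r' z (rfl|rfl|rfl) hz <;>
      rcases hz with ⟨hd,hj',hf,he⟩|⟨hd,hj',hf,he⟩|⟨hd,hj',hf,he⟩|⟨hd,hi',hf,he⟩|⟨hd,hi',hf,he⟩|⟨hd,hi',hf,he⟩|⟨hd,hf,he⟩|⟨hd,hf,he⟩|⟨hd,hf,he⟩ <;>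
      first
        | exact he
        | (exfalso; exact hb.2.1 hf)
        | (exfalso; exact hb.2.2.1 hf)
        | (exfalso; exact hb.2.2.2 hf)
        | (exfalso; exact absurd hd (by simp))
  have hDb : ∀ (r' : Fin 3 × ℕ × ℕ),
      (r' = ((0:Fin 3),i,j+1) ∨ r' = ((1:Fin 3),i+1,j) ∨ r' = ((2:Fin 3),i,j)) →
      DFam n h r' b := by
    rintro r' (rfl|rfl|rfl)
    · exact DFam.blue0 (j := j+1) (by omega) hb
    · exact DFam.blue1 (i := i+1) (by omega) hb
    · exact DFam.blue2 hb
  have nxt_eq_of_DFam : ∀ (r' : Fin 3 × ℕ × ℕ) (t : RBVertex),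
      (Sum.inr r' : RBVertex) ∈ c.support → DFam n h r' t →
      nxt c (Sum.inr r') = t ∨ prv c (Sum.inr r') = t := by
    intro r' t hr hD
    rcases struct hcyc hflat hr with ⟨_,hD'⟩ | ⟨hD',_⟩
    · exact Or.inr (DFam_unique hflat hD' hD)
    · exact Or.inl (DFam_unique hflat hD' hD)
  have hside : ∀ (r' : Fin 3 × ℕ × ℕ),
      (r' = ((0:Fin 3),i,j+1) ∨ r' = ((1:Fin 3),i+1,j) ∨ r' = ((2:Fin 3),i,j)) →
      (Sum.inr r' : RBVertex) ∈ c.support →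
      (Sum.inr r' = prv c b ∨ Sum.inr r' = nxt c b) ∧ b ∈ c.support := by
    intro r' hmem hs
    rcases nxt_eq_of_DFam r' b hs (hDb r' hmem) with hn | hp
    · have he : prv c b = Sum.inr r' := prv_eq_of_nxt_eq hcyc hs hn
      exact ⟨Or.inl he.symm, by rw [← hn]; exact nxt_mem hcyc hs⟩
    · have he : nxt c b = Sum.inr r' := nxt_eq_of_prv_eq hcyc hs hp
      exact ⟨Or.inr he.symm, by rw [← hp]; exact prv_mem hcyc hs⟩
  rcases Classical.em (b ∈ c.support) with hbm | hbm
  · have hval : ∀ (r' : Fin 3 × ℕ × ℕ), (Sum.inr r' : RBVertex) = prv c b →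
        xval c r' = -sgn r'.1 := by
      intro r' hd
      have hs : (Sum.inr r' : RBVertex) ∈ c.support := by
        rw [hd]; exact prv_mem hcyc hbm
      have hnx : nxt c (Sum.inr r') = b := by rw [hd]; exact nxt_prv hcyc hbm
      rw [xval, if_pos hs, hnx, hbdef]
      simp [orv]
    have hval' : ∀ (r' : Fin 3 × ℕ × ℕ),
        (r' = ((0:Fin 3),i,j+1) ∨ r' = ((1:Fin 3),i+1,j) ∨ r' = ((2:Fin 3),i,j)) →
        (Sum.inr r' : RBVertex) = nxt c b → xval c r' = sgn r'.1 := by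
      intro r' hmem hd
      have hs : (Sum.inr r' : RBVertex) ∈ c.support := by
        rw [hd]; exact nxt_mem hcyc hbm
      have hpv : prv c (Sum.inr r') = b := by rw [hd]; exact prv_nxt hcyc hbm
      rcases struct hcyc hflat hs with ⟨hU',hD'⟩ | ⟨hD',hU'⟩
      · rw [xval, if_pos hs, orv_UFam hU', mul_one]
      · exfalso
        exact (prv_ne_nxt hcyc hs) (by rw [hpv, hDonly r' _ hmem hD'])
    have hzero : ∀ (r' : Fin 3 × ℕ × ℕ),
        (r' = ((0:Fin 3),i,j+1) ∨ r' = ((1:Fin 3),i+1,j) ∨ r' = ((2:Fin 3),i,j)) →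
        (Sum.inr r' : RBVertex) ≠ prv c b → (Sum.inr r' : RBVertex) ≠ nxt c b →
        xval c r' = 0 := by
      intro r' hmem h1 h2
      rw [xval, if_neg]
      intro hs
      rcases (hside r' hmem hs).1 with e|e
      exacts [h1 e, h2 e]
    have hpb : prv c b = Sum.inr ((0:Fin 3),i,j+1) ∨ prv c b = Sum.inr ((1:Fin 3),i+1,j) ∨
        prv c b = Sum.inr ((2:Fin 3),i,j) := by
      rcases adj_inl ((adj_prv hcyc hbm).symm) with ⟨i',j',ht,_,hz⟩ | ⟨i',j',ht,_,hz⟩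
      · exact absurd (by simpa [hbdef, Prod.ext_iff] using ht : False) id
      · obtain ⟨-, rfl, rfl⟩ : false = false ∧ i = i' ∧ j = j' := by
          simpa [hbdef, Prod.ext_iff] using ht
        exact hz
    have hnb : nxt c b = Sum.inr ((0:Fin 3),i,j+1) ∨ nxt c b = Sum.inr ((1:Fin 3),i+1,j) ∨
        nxt c b = Sum.inr ((2:Fin 3),i,j) := by
      rcases adj_inl (adj_nxt hcyc hbm) with ⟨i',j',ht,_,hz⟩ | ⟨i',j',ht,_,hz⟩
      · exact absurd (by simpa [hbdef, Prod.ext_iff] using ht : False) id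
      · obtain ⟨-, rfl, rfl⟩ : false = false ∧ i = i' ∧ j = j' := by
          simpa [hbdef, Prod.ext_iff] using ht
        exact hz
    have hne := prv_ne_nxt hcyc hbm
    have M0 : ((0:Fin 3),i,j+1) = ((0:Fin 3),i,j+1) ∨ ((0:Fin 3),i,j+1) = ((1:Fin 3),i+1,j) ∨
        ((0:Fin 3),i,j+1) = ((2:Fin 3),i,j) := Or.inl rfl
    have M1 : ((1:Fin 3),i+1,j) = ((0:Fin 3),i,j+1) ∨ ((1:Fin 3),i+1,j) = ((1:Fin 3),i+1,j) ∨
        ((1:Fin 3),i+1,j) = ((2:Fin 3),i,j) := Or.inr (Or.inl rfl)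
    have M2 : ((2:Fin 3),i,j) = ((0:Fin 3),i,j+1) ∨ ((2:Fin 3),i,j) = ((1:Fin 3),i+1,j) ∨
        ((2:Fin 3),i,j) = ((2:Fin 3),i,j) := Or.inr (Or.inr rfl)
    rcases hpb with e1|e1|e1 <;> rcases hnb with e2|e2|e2
    · exact absurd (e1.trans e2.symm) hne
    · rw [hval _ e1.symm, hval' _ M1 e2.symm,
        hzero _ M2 (by rw [e1]; simp) (by rw [e2]; simp)]; simp [sgn]
    · rw [hval _ e1.symm, hval' _ M2 e2.symm,
        hzero _ M1 (by rw [e1]; simp) (by rw [e2]; simp)]; simp [sgn]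
    · rw [hval _ e1.symm, hval' _ M0 e2.symm,
        hzero _ M2 (by rw [e1]; simp) (by rw [e2]; simp)]; simp [sgn]
    · exact absurd (e1.trans e2.symm) hne
    · rw [hval _ e1.symm, hval' _ M2 e2.symm,
        hzero _ M0 (by rw [e1]; simp) (by rw [e2]; simp)]; simp [sgn]
    · rw [hval _ e1.symm, hval' _ M0 e2.symm,
        hzero _ M1 (by rw [e1]; simp) (by rw [e2]; simp)]; simp [sgn]
    · rw [hval _ e1.symm, hval' _ M1 e2.symm,
        hzero _ M0 (by rw [e1]; simp) (by rw [e2]; simp)]; simp [sgn]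
    · exact absurd (e1.trans e2.symm) hne
  · have hz : ∀ (r' : Fin 3 × ℕ × ℕ),
        (r' = ((0:Fin 3),i,j+1) ∨ r' = ((1:Fin 3),i+1,j) ∨ r' = ((2:Fin 3),i,j)) →
        xval c r' = 0 := by
      intro r' hmem
      rw [xval, if_neg]
      intro hs
      exact hbm (hside r' hmem hs).2
    rw [hz _ (by simp), hz _ (by simp), hz _ (by simp)]; ring

lemma not_mem_of_no_DFam (hcyc : c.IsCycle) (hflat : TrianglesAtMostOneFlat n h)
    {r : Fin 3 × ℕ × ℕ} (hD : ∀ z, ¬ DFam n h r z) : (Sum.inr r : RBVertex) ∉ c.support := by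
  intro hr
  rcases struct hcyc hflat hr with ⟨_, hD1⟩ | ⟨hD1, _⟩
  · exact hD _ hD1
  · exact hD _ hD1

lemma xval_a_bottom (hcyc : c.IsCycle) (hflat : TrianglesAtMostOneFlat n h) (i : ℕ) :
    xval c (0,i,0) = 0 := by
  apply xval_of_not_mem
  apply not_mem_of_no_DFam hcyc hflat
  intro z hz
  rcases hz with ⟨hd,hj,_,_⟩|⟨hd,hj,_,_⟩|⟨hd,hj,_,_⟩|⟨hd,_,_,_⟩|⟨hd,_,_,_⟩|⟨hd,_,_,_⟩|⟨hd,_,_⟩|⟨hd,_,_⟩|⟨hd,_,_⟩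
  · exact absurd hj (by simp)
  · exact absurd hj (by simp)
  · exact absurd hj (by simp)
  all_goals exact absurd hd (by simp)

lemma xval_b_left (hcyc : c.IsCycle) (hflat : TrianglesAtMostOneFlat n h) (j : ℕ) :
    xval c (1,0,j) = 0 := by
  apply xval_of_not_mem
  apply not_mem_of_no_DFam hcyc hflat
  intro z hz
  rcases hz with ⟨hd,_,_,_⟩|⟨hd,_,_,_⟩|⟨hd,_,_,_⟩|⟨hd,hi,_,_⟩|⟨hd,hi,_,_⟩|⟨hd,hi,_,_⟩|⟨hd,_,_⟩|⟨hd,_,_⟩|⟨hd,_,_⟩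
  · exact absurd hd (by simp)
  · exact absurd hd (by simp)
  · exact absurd hd (by simp)
  · exact absurd hi (by simp)
  · exact absurd hi (by simp)
  · exact absurd hi (by simp)
  all_goals exact absurd hd (by simp)

lemma xval_c_hyp (hcyc : c.IsCycle) (hflat : TrianglesAtMostOneFlat n h) {i j : ℕ}
    (hn : n < i + j + 2) : xval c (2,i,j) = 0 := by
  apply xval_of_not_mem
  apply not_mem_of_no_DFam hcyc hflat
  intro z hz
  rcases hz with ⟨hd,_,_,_⟩|⟨hd,_,_,_⟩|⟨hd,_,_,_⟩|⟨hd,_,_,_⟩|⟨hd,_,_,_⟩|⟨hd,_,_,_⟩|⟨hd,hb,_⟩|⟨hd,hb,_⟩|⟨hd,hb,_⟩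
  · exact absurd hd (by simp)
  · exact absurd hd (by simp)
  · exact absurd hd (by simp)
  · exact absurd hd (by simp)
  · exact absurd hd (by simp)
  · exact absurd hd (by simp)
  · have hb1 : i + j + 2 ≤ n := hb.1
    omega
  · have hb1 : i + j + 2 ≤ n := hb.1
    omega
  · have hb1 : i + j + 2 ≤ n := hb.1
    omega

noncomputable def G0 (c : (SimpleGraph.fromRel (RBRel n h)).Walk vv vv) (i j : ℕ) : ℝ :=
  if 1 ≤ j ∧ FlatR3 n h i (j-1) then xval c (1,i+1,j-1) - xval c (2,i,j-1) else xval c (0,i,j)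

noncomputable def G1 (c : (SimpleGraph.fromRel (RBRel n h)).Walk vv vv) (i j : ℕ) : ℝ :=
  if 1 ≤ i ∧ FlatR2 n h (i-1) j then xval c (0,i,j) + xval c (2,i,j) else xval c (1,i,j)

noncomputable def G2 (c : (SimpleGraph.fromRel (RBRel n h)).Walk vv vv) (i j : ℕ) : ℝ :=
  if FlatR1 n h i j then xval c (1,i,j) - xval c (0,i,j) else xval c (2,i,j)

noncomputable def ff (c : (SimpleGraph.fromRel (RBRel n h)).Walk vv vv) (i j : ℕ) : ℝ :=
  ∑ k ∈ Finset.range j, G1 c i k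

lemma ff_zero (i : ℕ) : ff c i 0 = 0 := by simp [ff]

lemma ff_step (i j : ℕ) : ff c i (j+1) = ff c i j + G1 c i j := by
  simp [ff, Finset.sum_range_succ]

lemma Tup (hcyc : c.IsCycle) (hflat : TrianglesAtMostOneFlat n h) {i j : ℕ}
    (hr : i + j + 1 ≤ n) : G0 c i j + G2 c i j = G1 c i j := by
  rcases Classical.em (FlatR1 n h i j) with h1 | h1
  · rw [G0, if_neg (fun hc => (hflat.1 i j hr).2.1 ⟨h1, hc⟩),
      G2, if_pos h1,
      G1, if_neg (fun hc => (hflat.1 i j hr).1 ⟨h1, hc⟩)]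
    ring
  · rcases Classical.em (1 ≤ i ∧ FlatR2 n h (i-1) j) with h2 | h2
    · rw [G0, if_neg (fun hc => (hflat.1 i j hr).2.2 ⟨h2, hc⟩),
        G2, if_neg h1, G1, if_pos h2]
    · rcases Classical.em (1 ≤ j ∧ FlatR3 n h i (j-1)) with h3 | h3
      · obtain ⟨hj, hf3⟩ := h3
        have pa := pairR3a hcyc hflat hf3
        have pb := pairR3b hcyc hflat hf3
        rw [show j - 1 + 1 = j by omega] at pa pb
        rw [G0, if_pos ⟨hj, hf3⟩, G2, if_neg h1, G1, if_neg h2]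
        linarith
      · have hblue := blue_up hcyc hflat ⟨hr, h1, h2, h3⟩
        rw [G0, if_neg h3, G2, if_neg h1, G1, if_neg h2]
        linarith

lemma Tdown (hcyc : c.IsCycle) (hflat : TrianglesAtMostOneFlat n h) {i j : ℕ}
    (hr : i + j + 2 ≤ n) : G0 c i (j+1) + G2 c i j = G1 c (i+1) j := by
  rcases Classical.em (FlatR1 n h i j) with h1 | h1
  · have pa := pairR1a hcyc hflat h1
    have pb := pairR1b hcyc hflat h1
    rw [G0, if_neg (fun hc => (hflat.2 i j hr).2.1 ⟨h1, hc.2⟩),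
      G2, if_pos h1,
      G1, if_neg (fun hc => (hflat.2 i j hr).1 ⟨h1, hc.2⟩)]
    try simp only [Nat.add_sub_cancel]
    linarith
  · rcases Classical.em (FlatR2 n h i j) with h2 | h2
    · have pa := pairR2a hcyc hflat h2
      have pb := pairR2b hcyc hflat h2
      rw [G0, if_neg (fun hc => (hflat.2 i j hr).2.2 ⟨h2, hc.2⟩),
        G2, if_neg h1, G1, if_pos ⟨by omega, h2⟩]
      try simp only [Nat.add_sub_cancel]
      linarith
    · rcases Classical.em (FlatR3 n h i j) with h3 | h3
      · rw [G0, if_pos ⟨by omega, h3⟩, G2, if_neg h1,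
          G1, if_neg (fun hc => (hflat.2 i j hr).2.2 ⟨hc.2, h3⟩)]
        try simp only [Nat.add_sub_cancel]
        ring
      · have hblue := blue_down hcyc hflat ⟨hr, h1, h2, h3⟩
        rw [G0, if_neg (fun hc => h3 hc.2), G2, if_neg h1,
          G1, if_neg (fun hc => h2 hc.2)]
        try simp only [Nat.add_sub_cancel]
        linarith

lemma Hlem (hcyc : c.IsCycle) (hflat : TrianglesAtMostOneFlat n h) {i : ℕ} :
    ∀ {j : ℕ}, i + j + 1 ≤ n → ff c (i+1) j - ff c i j = G0 c i j := by
  intro j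
  induction j with
  | zero =>
    intro hr
    rw [ff_zero, ff_zero, G0, if_neg (by rintro ⟨hj,_⟩; omega), xval_a_bottom hcyc hflat]
    ring
  | succ j ih =>
    intro hr
    have h1 : i + j + 1 ≤ n := by omega
    have h2 : i + j + 2 ≤ n := by omega
    have e1 := ff_step (c := c) i j
    have e2 := ff_step (c := c) (i+1) j
    have e3 := Tdown hcyc hflat h2
    have e4 := Tup hcyc hflat h1
    have e5 := ih h1
    rw [e1, e2]
    linarith

lemma ff_left (hcyc : c.IsCycle) (hflat : TrianglesAtMostOneFlat n h) (j : ℕ) :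
    ff c 0 j = 0 := by
  apply Finset.sum_eq_zero
  intro k _
  rw [G1, if_neg (by rintro ⟨hi,_⟩; omega), xval_b_left hcyc hflat]

lemma ff_hyp (hcyc : c.IsCycle) (hflat : TrianglesAtMostOneFlat n h) :
    ∀ j i, i + j = n → ff c i j = 0 := by
  intro j
  induction j with
  | zero => intro i _; exact ff_zero i
  | succ j ih =>
    intro i hij
    have hn1 : (i+1) + j = n := by omega
    have hr : i + j + 1 ≤ n := by omega
    have e0 := ih (i+1) hn1
    have e1 := ff_step (c := c) i j
    have e2 := Hlem hcyc hflat (i := i) (j := j) hr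
    have e3 := Tup hcyc hflat (i := i) (j := j) hr
    have e4 : G2 c i j = 0 := by
      rw [G2, if_neg (fun hc => by have := hc.1; omega), xval_c_hyp hcyc hflat (by omega)]
    linarith

lemma ffR1 (hcyc : c.IsCycle) (hflat : TrianglesAtMostOneFlat n h) {i j : ℕ}
    (hf : FlatR1 n h i j) :
    ff c (i+1) j + ff c i (j+1) = ff c i j + ff c (i+1) (j+1) := by
  have pb := pairR1b hcyc hflat hf
  have e1 := ff_step (c := c) i j
  have e2 := ff_step (c := c) (i+1) j
  have g1 : G1 c i j = xval c (1,i,j) := by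
    rw [G1, if_neg (fun hc => (hflat.1 i j (by have := hf.1; omega)).1 ⟨hf, hc⟩)]
  have g2 : G1 c (i+1) j = xval c (1,i+1,j) := by
    rw [G1, if_neg (fun hc => (hflat.2 i j hf.1).1 ⟨hf, hc.2⟩)]
  linarith [g1, g2, pb]

lemma ffR2 (hcyc : c.IsCycle) (hflat : TrianglesAtMostOneFlat n h) {i j : ℕ}
    (hf : FlatR2 n h i j) :
    ff c i (j+1) + ff c (i+2) j = ff c (i+1) j + ff c (i+1) (j+1) := by
  have pb := pairR2b hcyc hflat hf
  have e1 : ff c (i+2) j - ff c (i+1) j = G0 c (i+1) j :=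
    Hlem hcyc hflat (by have := hf.1; omega)
  have e2 : ff c (i+1) (j+1) - ff c i (j+1) = G0 c i (j+1) :=
    Hlem hcyc hflat (by have := hf.1; omega)
  have g1 : G0 c (i+1) j = xval c (0,i+1,j) := by
    rw [G0, if_neg]
    rintro ⟨hj, h3⟩
    exact (hflat.1 (i+1) j (by have := hf.1; omega)).2.2 ⟨⟨by omega, hf⟩, ⟨hj, h3⟩⟩
  have g2 : G0 c i (j+1) = xval c (0,i,j+1) := by
    rw [G0, if_neg]
    rintro ⟨-, h3⟩
    exact (hflat.2 i j hf.1).2.2 ⟨hf, by simpa using h3⟩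
  linarith [pb, g1, g2]

lemma ffR3 (hcyc : c.IsCycle) (hflat : TrianglesAtMostOneFlat n h) {i j : ℕ}
    (hf : FlatR3 n h i j) :
    ff c (i+1) j + ff c i (j+2) = ff c i (j+1) + ff c (i+1) (j+1) := by
  have pb := pairR3b hcyc hflat hf
  have e1 := ff_step (c := c) i (j+1)
  have e2 := ff_step (c := c) (i+1) j
  have g1 : G1 c i (j+1) = xval c (1,i,j+1) := by
    rw [G1, if_neg]
    rintro ⟨hi, h2⟩
    exact (hflat.1 i (j+1) (by have := hf.1; omega)).2.2 ⟨⟨hi, h2⟩, ⟨by omega, by simpa using hf⟩⟩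
  have g2 : G1 c (i+1) j = xval c (1,i+1,j) := by
    rw [G1, if_neg]
    rintro ⟨-, h2⟩
    exact (hflat.2 i j hf.1).2.2 ⟨by simpa using h2, hf⟩
  linarith [pb, g1, g2]

lemma sgn_ne_zero (d : Fin 3) : sgn d ≠ 0 := by
  unfold sgn; split <;> norm_num

lemma supp_red_contra (hcyc : c.IsCycle) (hflat : TrianglesAtMostOneFlat n h)
    (hG0 : ∀ i j, i + j + 1 ≤ n → G0 c i j = 0)
    (hG1 : ∀ i j, i + j + 1 ≤ n → G1 c i j = 0)
    (hG2 : ∀ i j, i + j + 1 ≤ n → G2 c i j = 0)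
    {r : Fin 3 × ℕ × ℕ} (hr : (Sum.inr r : RBVertex) ∈ c.support) : False := by
  obtain ⟨d,i,j⟩ := r
  have hxnz : xval c (d,i,j) ≠ 0 := by
    rw [xval, if_pos hr]
    rcases fam_of_adj (adj_nxt hcyc hr) with hU | hD
    · rw [orv_UFam hU, mul_one]; exact sgn_ne_zero d
    · rw [orv_DFam hD]
      simpa using sgn_ne_zero d
  apply hxnz
  rcases fam_of_adj (adj_nxt hcyc hr) with hU | hD
  · rcases hU with ⟨hb,_⟩|⟨hd,hf,_⟩|⟨hd,hi,hf,_⟩|⟨hd,hf,_⟩|⟨hd,hj,hf,_⟩|⟨hd,hi,hf,_⟩|⟨hd,hj,hf,_⟩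
    · have hb1 : i + j + 1 ≤ n := hb.1
      have hb2 : ¬ FlatR1 n h i j := hb.2.1
      have hb3 : ¬ (1 ≤ i ∧ FlatR2 n h (i-1) j) := hb.2.2.1
      have hb4 : ¬ (1 ≤ j ∧ FlatR3 n h i (j-1)) := hb.2.2.2
      have hd3 : d = 0 ∨ d = 1 ∨ d = 2 := by fin_cases d <;> simp
      rcases hd3 with rfl | rfl | rfl
      · have := hG0 i j hb1; rwa [G0, if_neg hb4] at this
      · have := hG1 i j hb1; rwa [G1, if_neg hb3] at this
      · have := hG2 i j hb1; rwa [G2, if_neg hb2] at this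
    · obtain rfl : d = 0 := hd
      have hf1 : i + j + 2 ≤ n := hf.1
      have h1 : i + j + 1 ≤ n := by omega
      have := hG0 i j h1
      rwa [G0, if_neg (fun hc => (hflat.1 i j h1).2.1 ⟨hf, hc⟩)] at this
    · obtain rfl : d = 0 := hd
      have hi' : 1 ≤ i := hi
      have hf1 : (i-1) + j + 2 ≤ n := hf.1
      have h1 : i + j + 1 ≤ n := by omega
      have := hG0 i j h1
      rwa [G0, if_neg (fun hc => (hflat.1 i j h1).2.2 ⟨⟨hi', hf⟩, hc⟩)] at this
    · obtain rfl : d = 1 := hd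
      have hf1 : i + j + 2 ≤ n := hf.1
      have h1 : i + j + 1 ≤ n := by omega
      have := hG1 i j h1
      rwa [G1, if_neg (fun hc => (hflat.1 i j h1).1 ⟨hf, hc⟩)] at this
    · obtain rfl : d = 1 := hd
      have hj' : 1 ≤ j := hj
      have hf1 : i + (j-1) + 2 ≤ n := hf.1
      have h1 : i + j + 1 ≤ n := by omega
      have := hG1 i j h1
      rwa [G1, if_neg (fun hc => (hflat.1 i j h1).2.2 ⟨hc, ⟨hj', hf⟩⟩)] at this
    · obtain rfl : d = 2 := hd
      have hi' : 1 ≤ i := hi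
      have hf1 : (i-1) + j + 2 ≤ n := hf.1
      have h1 : i + j + 1 ≤ n := by omega
      have := hG2 i j h1
      rwa [G2, if_neg (fun h1' => (hflat.1 i j h1).1 ⟨h1', ⟨hi', hf⟩⟩)] at this
    · obtain rfl : d = 2 := hd
      have hj' : 1 ≤ j := hj
      have hf1 : i + (j-1) + 2 ≤ n := hf.1
      have h1 : i + j + 1 ≤ n := by omega
      have := hG2 i j h1
      rwa [G2, if_neg (fun h1' => (hflat.1 i j h1).2.1 ⟨h1', ⟨hj', hf⟩⟩)] at this
  · rcases hD with ⟨hd,hj,hb,_⟩|⟨hd,hj,hf,_⟩|⟨hd,hj,hf,_⟩|⟨hd,hi,hb,_⟩|⟨hd,hi,hf,_⟩|⟨hd,hi,hf,_⟩|⟨hd,hb,_⟩|⟨hd,hf,_⟩|⟨hd,hf,_⟩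
    · obtain rfl : d = 0 := hd
      have hj' : 1 ≤ j := hj
      have hb1 : i + (j-1) + 2 ≤ n := hb.1
      have h1 : i + j + 1 ≤ n := by omega
      have := hG0 i j h1
      rwa [G0, if_neg (fun hc => hb.2.2.2 hc.2)] at this
    · obtain rfl : d = 0 := hd
      have hj' : 1 ≤ j := hj
      have hf1 : i + (j-1) + 2 ≤ n := hf.1
      have h1 : i + j + 1 ≤ n := by omega
      have := hG0 i j h1
      rwa [G0, if_neg (fun hc => (hflat.2 i (j-1) hf1).2.1 ⟨hf, hc.2⟩)] at this
    · obtain rfl : d = 0 := hd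
      have hj' : 1 ≤ j := hj
      have hf1 : i + (j-1) + 2 ≤ n := hf.1
      have h1 : i + j + 1 ≤ n := by omega
      have := hG0 i j h1
      rwa [G0, if_neg (fun hc => (hflat.2 i (j-1) hf1).2.2 ⟨hf, hc.2⟩)] at this
    · obtain rfl : d = 1 := hd
      have hi' : 1 ≤ i := hi
      have hb1 : (i-1) + j + 2 ≤ n := hb.1
      have h1 : i + j + 1 ≤ n := by omega
      have := hG1 i j h1
      rwa [G1, if_neg (fun hc => hb.2.2.1 hc.2)] at this
    · obtain rfl : d = 1 := hd
      have hi' : 1 ≤ i := hi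
      have hf1 : (i-1) + j + 2 ≤ n := hf.1
      have h1 : i + j + 1 ≤ n := by omega
      have := hG1 i j h1
      rwa [G1, if_neg (fun hc => (hflat.2 (i-1) j hf1).1 ⟨hf, hc.2⟩)] at this
    · obtain rfl : d = 1 := hd
      have hi' : 1 ≤ i := hi
      have hf1 : (i-1) + j + 2 ≤ n := hf.1
      have h1 : i + j + 1 ≤ n := by omega
      have := hG1 i j h1
      rwa [G1, if_neg (fun hc => (hflat.2 (i-1) j hf1).2.2 ⟨hc.2, hf⟩)] at this
    · obtain rfl : d = 2 := hd
      have hb1 : i + j + 2 ≤ n := hb.1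
      have h1 : i + j + 1 ≤ n := by omega
      have := hG2 i j h1
      rwa [G2, if_neg hb.2.1] at this
    · obtain rfl : d = 2 := hd
      have hf1 : i + j + 2 ≤ n := hf.1
      have h1 : i + j + 1 ≤ n := by omega
      have := hG2 i j h1
      rwa [G2, if_neg (fun h1' => (hflat.2 i j hf1).1 ⟨h1', hf⟩)] at this
    · obtain rfl : d = 2 := hd
      have hf1 : i + j + 2 ≤ n := hf.1
      have h1 : i + j + 1 ≤ n := by omega
      have := hG2 i j h1
      rwa [G2, if_neg (fun h1' => (hflat.2 i j hf1).2.1 ⟨h1', hf⟩)] at this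

lemma exists_red (hcyc : c.IsCycle) :
    ∃ r : Fin 3 × ℕ × ℕ, (Sum.inr r : RBVertex) ∈ c.support := by
  have key : ∀ u : RBVertex, u ∈ c.support →
      ∃ r : Fin 3 × ℕ × ℕ, (Sum.inr r : RBVertex) ∈ c.support := by
    intro u hu
    rcases u with t | r
    · have hadj := adj_nxt hcyc hu
      rcases adj_inl hadj with ⟨i,j,_,_,hz⟩|⟨i,j,_,_,hz⟩ <;>
        rcases hz with hz|hz|hz <;>
        exact ⟨_, by rw [← hz]; exact nxt_mem hcyc hu⟩
    · exact ⟨r, hu⟩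
  exact key vv c.start_mem_support

end RB

section Perturb
variable {n : ℕ} {h : ℕ → ℕ → ℝ}

lemma eps_bound {ε s t : ℝ} (hs : 0 ≤ s) (hε : 0 < ε) (hle : ε ≤ s / (|t| + 1)) :
    0 ≤ s + ε * t ∧ 0 ≤ s - ε * t := by
  have h1 : (0:ℝ) < |t| + 1 := by positivity
  have h2 : ε * (|t| + 1) ≤ s := (le_div_iff₀ h1).mp hle
  constructor <;> nlinarith [le_abs_self t, neg_abs_le t, abs_nonneg t, hε.le]

attribute [local instance] Classical.propDecidable

noncomputable def bnd (cond : Prop) (s t : ℝ) : ℝ :=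
  have : Decidable cond := Classical.propDecidable _
  if cond then s / (|t| + 1) else 1

lemma bnd_pos {cond : Prop} {s t : ℝ} (hcond : cond → 0 < s) : 0 < bnd cond s t := by
  unfold bnd
  split_ifs with hcnd
  · exact div_pos (hcond hcnd) (by positivity)
  · norm_num

lemma bnd_le {cond : Prop} {s t : ℝ} (hcnd : cond) : bnd cond s t = s / (|t| + 1) := by
  unfold bnd
  exact if_pos hcnd

lemma hive_perturb (hh : IsHive n h) (F : ℕ → ℕ → ℝ)
    (hFR1 : ∀ i j, FlatR1 n h i j → F (i+1) j + F i (j+1) = F i j + F (i+1) (j+1))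
    (hFR2 : ∀ i j, FlatR2 n h i j → F (i+1) j + F (i+1) (j+1) = F i (j+1) + F (i+2) j)
    (hFR3 : ∀ i j, FlatR3 n h i j → F i (j+1) + F (i+1) (j+1) = F (i+1) j + F i (j+2)) :
    ∃ ε : ℝ, 0 < ε ∧ IsHive n (fun i j => h i j + ε * F i j) ∧
      IsHive n (fun i j => h i j - ε * F i j) := by
  classical
  set S1 : ℕ → ℕ → ℝ := fun i j => h (i+1) j + h i (j+1) - h i j - h (i+1) (j+1) with hS1
  set T1 : ℕ → ℕ → ℝ := fun i j => F (i+1) j + F i (j+1) - F i j - F (i+1) (j+1) with hT1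
  set S2 : ℕ → ℕ → ℝ := fun i j => h (i+1) j + h (i+1) (j+1) - h i (j+1) - h (i+2) j with hS2
  set T2 : ℕ → ℕ → ℝ := fun i j => F (i+1) j + F (i+1) (j+1) - F i (j+1) - F (i+2) j with hT2
  set S3 : ℕ → ℕ → ℝ := fun i j => h i (j+1) + h (i+1) (j+1) - h (i+1) j - h i (j+2) with hS3
  set T3 : ℕ → ℕ → ℝ := fun i j => F i (j+1) + F (i+1) (j+1) - F (i+1) j - F i (j+2) with hT3
  set q : ℕ × ℕ → ℝ := fun p =>
    min (min (bnd (p.1+p.2+2 ≤ n ∧ ¬ FlatR1 n h p.1 p.2) (S1 p.1 p.2) (T1 p.1 p.2))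
             (bnd (p.1+p.2+2 ≤ n ∧ ¬ FlatR2 n h p.1 p.2) (S2 p.1 p.2) (T2 p.1 p.2)))
        (bnd (p.1+p.2+2 ≤ n ∧ ¬ FlatR3 n h p.1 p.2) (S3 p.1 p.2) (T3 p.1 p.2)) with hq
  set P : Finset (ℕ × ℕ) := (Finset.range (n+1)) ×ˢ (Finset.range (n+1)) with hP
  have hP0 : ((0,0) : ℕ × ℕ) ∈ P := by simp [hP]
  set ε : ℝ := P.inf' ⟨_, hP0⟩ q with hεdef
  have hεpos : 0 < ε := by
    rw [hεdef]; apply (Finset.lt_inf'_iff _).mpr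
    intro p hp
    refine lt_min (lt_min ?_ ?_) ?_
    · refine bnd_pos (fun hcnd => ?_)
      have hge := (hh p.1 p.2 hcnd.1).1
      have hne : S1 p.1 p.2 ≠ 0 := by
        intro he
        exact hcnd.2 ⟨hcnd.1, by simp only [hS1] at he; linarith⟩
      have : 0 ≤ S1 p.1 p.2 := by simp only [hS1]; linarith
      cases this.lt_or_eq with
      | inl hlt => exact hlt
      | inr heq => exact absurd heq.symm hne
    · refine bnd_pos (fun hcnd => ?_)
      have hge := (hh p.1 p.2 hcnd.1).2.1
      have hne : S2 p.1 p.2 ≠ 0 := by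
        intro he
        exact hcnd.2 ⟨hcnd.1, by simp only [hS2] at he; linarith⟩
      have : 0 ≤ S2 p.1 p.2 := by simp only [hS2]; linarith
      cases this.lt_or_eq with
      | inl hlt => exact hlt
      | inr heq => exact absurd heq.symm hne
    · refine bnd_pos (fun hcnd => ?_)
      have hge := (hh p.1 p.2 hcnd.1).2.2
      have hne : S3 p.1 p.2 ≠ 0 := by
        intro he
        exact hcnd.2 ⟨hcnd.1, by simp only [hS3] at he; linarith⟩
      have : 0 ≤ S3 p.1 p.2 := by simp only [hS3]; linarith
      cases this.lt_or_eq with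
      | inl hlt => exact hlt
      | inr heq => exact absurd heq.symm hne
  have hmem : ∀ i j : ℕ, i + j + 2 ≤ n → ((i,j) : ℕ × ℕ) ∈ P := by
    intro i j hij
    simp only [hP, Finset.mem_product, Finset.mem_range]
    omega
  have hkey : ∀ i j : ℕ, i + j + 2 ≤ n →
      (0 ≤ S1 i j + ε * T1 i j ∧ 0 ≤ S1 i j - ε * T1 i j) ∧
      (0 ≤ S2 i j + ε * T2 i j ∧ 0 ≤ S2 i j - ε * T2 i j) ∧
      (0 ≤ S3 i j + ε * T3 i j ∧ 0 ≤ S3 i j - ε * T3 i j) := by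
    intro i j hij
    have hle : ε ≤ q (i,j) := Finset.inf'_le _ (hmem i j hij)
    have hle1 : ε ≤ bnd (i+j+2 ≤ n ∧ ¬ FlatR1 n h i j) (S1 i j) (T1 i j) :=
      le_trans hle (le_trans (min_le_left _ _) (min_le_left _ _))
    have hle2 : ε ≤ bnd (i+j+2 ≤ n ∧ ¬ FlatR2 n h i j) (S2 i j) (T2 i j) :=
      le_trans hle (le_trans (min_le_left _ _) (min_le_right _ _))
    have hle3 : ε ≤ bnd (i+j+2 ≤ n ∧ ¬ FlatR3 n h i j) (S3 i j) (T3 i j) :=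
      le_trans hle (min_le_right _ _)
    refine ⟨?_, ?_, ?_⟩
    · rcases Classical.em (FlatR1 n h i j) with hf | hf
      · have ht : T1 i j = 0 := by
          have := hFR1 i j hf; simp only [hT1]; linarith
        have hs : 0 ≤ S1 i j := by
          have := (hh i j hij).1; simp only [hS1]; linarith
        rw [ht]; constructor <;> linarith
      · rw [bnd_le ⟨hij, hf⟩] at hle1
        exact eps_bound (by have := (hh i j hij).1; simp only [hS1]; linarith) hεpos hle1
    · rcases Classical.em (FlatR2 n h i j) with hf | hf
      · have ht : T2 i j = 0 := by
          have := hFR2 i j hf; simp only [hT2]; linarith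
        have hs : 0 ≤ S2 i j := by
          have := (hh i j hij).2.1; simp only [hS2]; linarith
        rw [ht]; constructor <;> linarith
      · rw [bnd_le ⟨hij, hf⟩] at hle2
        exact eps_bound (by have := (hh i j hij).2.1; simp only [hS2]; linarith) hεpos hle2
    · rcases Classical.em (FlatR3 n h i j) with hf | hf
      · have ht : T3 i j = 0 := by
          have := hFR3 i j hf; simp only [hT3]; linarith
        have hs : 0 ≤ S3 i j := by
          have := (hh i j hij).2.2; simp only [hS3]; linarith
        rw [ht]; constructor <;> linarith
      · rw [bnd_le ⟨hij, hf⟩] at hle3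
        exact eps_bound (by have := (hh i j hij).2.2; simp only [hS3]; linarith) hεpos hle3
  refine ⟨ε, hεpos, ?_, ?_⟩
  · intro i j hij
    obtain ⟨⟨k1, -⟩, ⟨k2, -⟩, ⟨k3, -⟩⟩ := hkey i j hij
    simp only [hS1, hT1] at k1
    simp only [hS2, hT2] at k2
    simp only [hS3, hT3] at k3
    refine ⟨?_, ?_, ?_⟩ <;> (dsimp only; linarith)
  · intro i j hij
    obtain ⟨⟨-, k1⟩, ⟨-, k2⟩, ⟨-, k3⟩⟩ := hkey i j hij
    simp only [hS1, hT1] at k1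
    simp only [hS2, hT2] at k2
    simp only [hS3, hT3] at k3
    refine ⟨?_, ?_, ?_⟩ <;> (dsimp only; linarith)

end Perturb

/-- If a hive all of whose flatspaces are small triangles or small rhombi is a corner of
its hive polytope, then the associated red–blue graph is acyclic. -/
theorem redBlueGraph_isAcyclic_of_corner (n : ℕ) (hn : 1 ≤ n) (h : ℕ → ℕ → ℝ)
    (hh : IsHive n h) (hflat : TrianglesAtMostOneFlat n h) (hc : IsHiveCorner n h) :
    (SimpleGraph.fromRel (RBRel n h)).IsAcyclic := by
  intro v c hcyc
  have hFR1 : ∀ i j, FlatR1 n h i j →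
      RB.ff c (i+1) j + RB.ff c i (j+1) = RB.ff c i j + RB.ff c (i+1) (j+1) :=
    fun i j hf => RB.ffR1 hcyc hflat hf
  have hFR2 : ∀ i j, FlatR2 n h i j →
      RB.ff c (i+1) j + RB.ff c (i+1) (j+1) = RB.ff c i (j+1) + RB.ff c (i+2) j := by
    intro i j hf
    have := RB.ffR2 hcyc hflat hf
    linarith
  have hFR3 : ∀ i j, FlatR3 n h i j →
      RB.ff c i (j+1) + RB.ff c (i+1) (j+1) = RB.ff c (i+1) j + RB.ff c i (j+2) := by
    intro i j hf
    have := RB.ffR3 hcyc hflat hf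
    linarith
  obtain ⟨ε, hε, hive1, hive2⟩ := hive_perturb hh (fun i j => RB.ff c i j) hFR1 hFR2 hFR3
  have hFb : ∀ i j, InBorder n i j → RB.ff c i j = 0 := by
    rintro i j ⟨hij, h0 | h0 | h0⟩
    · subst h0; exact RB.ff_left hcyc hflat j
    · subst h0; exact RB.ff_zero i
    · exact RB.ff_hyp hcyc hflat j i h0
  have hb1 : ∀ i j, InBorder n i j → (fun i j => h i j + ε * RB.ff c i j) i j = h i j := by
    intro i j hb
    show h i j + ε * RB.ff c i j = h i j
    rw [hFb i j hb]
    ring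
  have hb2 : ∀ i j, InBorder n i j → (fun i j => h i j - ε * RB.ff c i j) i j = h i j := by
    intro i j hb
    show h i j - ε * RB.ff c i j = h i j
    rw [hFb i j hb]
    ring
  have hmid : ∀ i j, i + j ≤ n → h i j =
      ((fun i j => h i j + ε * RB.ff c i j) i j + (fun i j => h i j - ε * RB.ff c i j) i j) / 2 := by
    intro i j _
    show h i j = (h i j + ε * RB.ff c i j + (h i j - ε * RB.ff c i j)) / 2
    ring
  have hcor := hc _ _ hive1 hive2 hb1 hb2 hmid
  have hF0 : ∀ i j, i + j ≤ n → RB.ff c i j = 0 := by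
    intro i j hij
    have h1 : h i j + ε * RB.ff c i j = h i j := (hcor i j hij).1
    have h2 : ε * RB.ff c i j = 0 := by linarith
    exact (mul_eq_zero.mp h2).resolve_left (ne_of_gt hε)
  have hG1z : ∀ i j, i + j + 1 ≤ n → RB.G1 c i j = 0 := by
    intro i j hij
    have e := RB.ff_step (c := c) i j
    have z1 := hF0 i j (by omega)
    have z2 := hF0 i (j+1) (by omega)
    linarith
  have hG0z : ∀ i j, i + j + 1 ≤ n → RB.G0 c i j = 0 := by
    intro i j hij
    have e := RB.Hlem hcyc hflat (i := i) (j := j) hij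
    have z1 := hF0 i j (by omega)
    have z2 := hF0 (i+1) j (by omega)
    linarith
  have hG2z : ∀ i j, i + j + 1 ≤ n → RB.G2 c i j = 0 := by
    intro i j hij
    have e := RB.Tup hcyc hflat hij
    linarith [hG0z i j hij, hG1z i j hij]
  obtain ⟨r, hr⟩ := RB.exists_red hcyc
  exact RB.supp_red_contra hcyc hflat hG0z hG1z hG2z hr
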